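/- (Minimax bound for SMD with time-varying step sizes.) Consider differentiable models f_i : ℝ^m → ℝ and a nonnegative differentiable loss l with l(0) = l'(0) = 0. Suppose the positive step sizes η_i are such that w ↦ ψ(w) − η_i L_i(w) is convex for every i = 1, …, T. Then for every parameter w and noise values v_i with y_i = f_i(w) + v_i, the time-varying SMD iterates satisfy D_ψ(w, w_T) + Σ_{i=1}^T η_i D_{L_i}(w, w_{i−1}) ≤ D_ψ(w, w_0) + Σ_{i=1}^T η_i l(v_i). -/

import Mathlib

open scoped RealInnerProductSpace

/-- Bregman-divergence-like quantity `D_g(u, u') = g(u) - g(u') - ∇g(u')ᵀ(u - u')` of a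
(not necessarily convex) function `g`. -/
noncomputable def Dbreg {m : ℕ} (g : EuclideanSpace ℝ (Fin m) → ℝ)
    (u u' : EuclideanSpace ℝ (Fin m)) : ℝ :=
  g u - g u' - ⟪gradient g u', u - u'⟫

lemma aux_hasDerivAt_line {m : ℕ} {g : EuclideanSpace ℝ (Fin m) → ℝ}
    (hg : Differentiable ℝ g) (u' d : EuclideanSpace ℝ (Fin m)) (t : ℝ) :
    HasDerivAt (fun s : ℝ => g (u' + s • d)) ⟪gradient g (u' + t • d), d⟫ t := by
  have h1 : HasDerivAt (fun s : ℝ => u' + s • d) d t := by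
    simpa using ((hasDerivAt_id t).smul_const d).const_add u'
  have h2 : HasFDerivAt g
      (InnerProductSpace.toDual ℝ _ (gradient g (u' + t • d))) (u' + t • d) :=
    (hg _).hasGradientAt
  have h3 : HasDerivAt (fun s : ℝ => g (u' + s • d))
      (InnerProductSpace.toDual ℝ _ (gradient g (u' + t • d)) d) t := h2.comp_hasDerivAt t h1
  simpa [Function.comp, InnerProductSpace.toDual_apply_apply] using h3

lemma aux_Dbreg_nonneg {m : ℕ} {g : EuclideanSpace ℝ (Fin m) → ℝ}
    (hg : Differentiable ℝ g) (hc : ConvexOn ℝ Set.univ g)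
    (u u' : EuclideanSpace ℝ (Fin m)) : 0 ≤ Dbreg g u u' := by
  set d := u - u' with hd
  have hφconv : ConvexOn ℝ Set.univ (fun t : ℝ => g (u' + t • d)) := by
    have key := hc.comp_affineMap (AffineMap.lineMap u' u : ℝ →ᵃ[ℝ] EuclideanSpace ℝ (Fin m))
    have heq : (g ∘ (AffineMap.lineMap u' u : ℝ →ᵃ[ℝ] EuclideanSpace ℝ (Fin m)))
        = fun t : ℝ => g (u' + t • d) := by
      funext t
      simp only [Function.comp_apply, AffineMap.lineMap_apply, vsub_eq_sub, vadd_eq_add, hd]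
      rw [add_comm]
    rw [heq] at key
    simpa using key
  have h0 : HasDerivAt (fun t : ℝ => g (u' + t • d)) ⟪gradient g u', d⟫ 0 := by
    have := aux_hasDerivAt_line hg u' d 0
    simpa using this
  have hslope := hφconv.le_slope_of_hasDerivAt (Set.mem_univ (0 : ℝ)) (Set.mem_univ 1)
    one_pos h0
  rw [slope_def_field] at hslope
  have h1 : u' + (1 : ℝ) • d = u := by
    rw [one_smul, hd]; abel
  have h00 : u' + (0 : ℝ) • d = u' := by simp
  rw [h1, h00] at hslope
  simp only [Dbreg, hd]
  have : ⟪gradient g u', u - u'⟫ ≤ g u - g u' := by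
    simp [hd] at hslope ⊢
    linarith
  linarith

lemma aux_hasGradientAt_comb {m : ℕ} {ψ L : EuclideanSpace ℝ (Fin m) → ℝ}
    (hψ : Differentiable ℝ ψ) (hL : Differentiable ℝ L) (c : ℝ)
    (x : EuclideanSpace ℝ (Fin m)) :
    HasGradientAt (fun u => ψ u - c * L u) (gradient ψ x - c • gradient L x) x := by
  rw [hasGradientAt_iff_hasFDerivAt]
  have h1 : HasFDerivAt ψ (InnerProductSpace.toDual ℝ _ (gradient ψ x)) x :=
    (hψ x).hasGradientAt
  have h2 : HasFDerivAt L (InnerProductSpace.toDual ℝ _ (gradient L x)) x :=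
    (hL x).hasGradientAt
  have h3 : HasFDerivAt (fun u => ψ u - c * L u) (InnerProductSpace.toDual ℝ _ (gradient ψ x)
      - c • InnerProductSpace.toDual ℝ _ (gradient L x)) x := h1.sub (h2.const_mul c)
  rw [map_sub, map_smul]
  exact h3

/-- minimax upper bound for SMD with time-varying step sizes: if
`ψ - η_i L_i` is convex for `i = 1, …, T`, then the estimation-error energy is at most the
disturbance energy. -/
theorem stmt_19 {m : ℕ} (T : ℕ) (hT : 1 ≤ T) (y : ℕ → ℝ)
    (f : ℕ → EuclideanSpace ℝ (Fin m) → ℝ) (hf : ∀ i, Differentiable ℝ (f i))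
    (l : ℝ → ℝ) (hl : Differentiable ℝ l) (hlnn : ∀ z, 0 ≤ l z)
    (hl0 : l 0 = 0) (hl'0 : deriv l 0 = 0)
    (ψ : EuclideanSpace ℝ (Fin m) → ℝ) (hψ : Differentiable ℝ ψ)
    (hψconv : StrictConvexOn ℝ Set.univ ψ)
    (L : ℕ → EuclideanSpace ℝ (Fin m) → ℝ)
    (hLdef : ∀ i u, L i u = l (y i - f i u))
    (η : ℕ → ℝ) (hη : ∀ i, 0 < η i)
    (hstep : ∀ i ∈ Finset.range T,
      ConvexOn ℝ Set.univ (fun u => ψ u - η (i + 1) * L (i + 1) u))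
    (w₀ : EuclideanSpace ℝ (Fin m))
    (w : ℕ → EuclideanSpace ℝ (Fin m)) (hw0 : w 0 = w₀)
    (hupd : ∀ i : ℕ,
      gradient ψ (w (i + 1)) =
        gradient ψ (w i) - η (i + 1) • gradient (L (i + 1)) (w i))
    (wstar : EuclideanSpace ℝ (Fin m)) (v : ℕ → ℝ)
    (hdata : ∀ i : ℕ, y (i + 1) = f (i + 1) wstar + v (i + 1)) :
    Dbreg ψ wstar (w T)
        + ∑ i ∈ Finset.range T, η (i + 1) * Dbreg (L (i + 1)) wstar (w i)
      ≤ Dbreg ψ wstar w₀ + ∑ i ∈ Finset.range T, η (i + 1) * l (v (i + 1)) := by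
  have hLdiff : ∀ i : ℕ, Differentiable ℝ (L i) := by
    intro i
    have : L i = fun u => l (y i - f i u) := funext (hLdef i)
    rw [this]
    exact hl.comp ((differentiable_const (y i)).sub (hf i))
  -- per-step inequality
  have step : ∀ i ∈ Finset.range T,
      Dbreg ψ wstar (w (i + 1)) + η (i + 1) * Dbreg (L (i + 1)) wstar (w i)
        ≤ Dbreg ψ wstar (w i) + η (i + 1) * l (v (i + 1)) := by
    intro i hi
    set e := η (i + 1) with he
    set b := w i with hb
    set c := w (i + 1) with hc
    set a := wstar with ha
    have hLa : L (i + 1) a = l (v (i + 1)) := by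
      rw [hLdef, hdata i]; ring_nf
    have hLc : 0 ≤ L (i + 1) c := by rw [hLdef]; exact hlnn _
    have hgconv := hstep i hi
    have hgd : Differentiable ℝ (fun u => ψ u - e * L (i + 1) u) := fun x =>
      (aux_hasGradientAt_comb hψ (hLdiff (i + 1)) e x).differentiableAt
    have hgrad : gradient (fun u => ψ u - e * L (i + 1) u) b
        = gradient ψ b - e • gradient (L (i + 1)) b :=
      (aux_hasGradientAt_comb hψ (hLdiff (i + 1)) e b).gradient
    have hD : 0 ≤ Dbreg (fun u => ψ u - e * L (i + 1) u) c b :=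
      aux_Dbreg_nonneg hgd hgconv c b
    have hup := hupd i
    rw [← hb, ← hc, ← he] at hup
    simp only [Dbreg, hgrad] at hD ⊢
    rw [hup, hLa]
    simp only [inner_sub_left, inner_sub_right, real_inner_smul_left] at hD ⊢
    have hprod : 0 ≤ e * L (i + 1) c := mul_nonneg (hη (i + 1)).le hLc
    linarith
  -- induction
  have main : ∀ n : ℕ, n ≤ T →
      Dbreg ψ wstar (w n)
          + ∑ i ∈ Finset.range n, η (i + 1) * Dbreg (L (i + 1)) wstar (w i)
        ≤ Dbreg ψ wstar w₀ + ∑ i ∈ Finset.range n, η (i + 1) * l (v (i + 1)) := by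
    intro n
    induction n with
    | zero => intro _; simp [hw0]
    | succ n ih =>
      intro hn
      have h1 := ih (Nat.le_of_succ_le hn)
      have h2 := step n (Finset.mem_range.mpr hn)
      rw [Finset.sum_range_succ, Finset.sum_range_succ]
      linarith
  exact main T le_rfl
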